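/- Let 2/3 < α < 2 and E > 0. Then there exist a constant t̃ ∈ ℝ and constants C > 0 such that for all ξ ≥ 1, | ∫₀^{ξ} √(1 - β_E(x)) dx - ξ - τ E ξ^{(2-α)/(2+α)} - t̃ | ≤ C ξ^{-(3α-2)/(2+α)}. In particular, since α > 2/3 the error term tends to 0 as ξ → ∞. -/

import Mathlib

open MeasureTheory Set intervalIntegral

lemma sqrt_one_add_est (u : ℝ) (hu : 0 ≤ u) :
    |Real.sqrt (1 + u) - 1 - u / 2| ≤ u ^ 2 / 8 := by
  have h1 : (0:ℝ) ≤ 1 + u := by linarith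
  have hs : Real.sqrt (1 + u) ^ 2 = 1 + u := Real.sq_sqrt h1
  have hs0 : 0 ≤ Real.sqrt (1 + u) := Real.sqrt_nonneg _
  set s := Real.sqrt (1 + u)
  rw [abs_le]
  constructor
  · rcases le_or_gt (1 + u / 2 - u ^ 2 / 8) 0 with h | h
    · linarith
    · have h8 : u ≤ 8 := by nlinarith
      nlinarith [mul_nonneg (mul_nonneg hu hu) (sub_nonneg.2 h8),
        mul_pos h (show (0:ℝ) < s + (1 + u / 2 - u ^ 2 / 8) by linarith)]
  · nlinarith [sq_nonneg (s - (1 + u / 2)), sq_nonneg (s + 1 + u / 2)]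

theorem stmt13 (α : ℝ) (hα0 : 2 / 3 < α) (hα2 : α < 2) (E : ℝ) (hE : 0 < E)
    (c : ℝ) (hc : c = (1 + α / 2) ^ ((2 : ℝ) / (2 + α)))
    (β : ℝ → ℝ) (hβ : ∀ x : ℝ, β x = -E / (c ^ α * x ^ (2 * α / (2 + α))))
    (τ : ℝ) (hτ : τ = (2 + α) / (2 * (2 - α)) * (1 + α / 2) ^ (-(2 * α) / (2 + α))) :
    ∃ ttil : ℝ, ∃ C > (0 : ℝ), ∀ ξ : ℝ, 1 ≤ ξ →
      |(∫ x in (0 : ℝ)..ξ, Real.sqrt (1 - β x)) - ξ - τ * E * ξ ^ ((2 - α) / (2 + α)) - ttil|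
        ≤ C * ξ ^ (-(3 * α - 2) / (2 + α)) := by
  have h2α : (0:ℝ) < 2 + α := by linarith
  set p : ℝ := 2 * α / (2 + α) with hp
  have hp0 : 0 < p := div_pos (by linarith) h2α
  have hp1 : p < 1 := by rw [hp, div_lt_one h2α]; linarith
  have hp2 : 1 < 2 * p := by
    rw [hp, ← mul_div_assoc, lt_div_iff₀ h2α]; linarith
  have hbase : (0:ℝ) < 1 + α / 2 := by linarith
  have hc0 : 0 < c := by rw [hc]; exact Real.rpow_pos_of_pos hbase _
  have hcα : 0 < c ^ α := Real.rpow_pos_of_pos hc0 α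
  set K : ℝ := E / c ^ α with hK
  have hK0 : 0 < K := div_pos hE hcα
  set f : ℝ → ℝ := fun x => Real.sqrt (1 + K / x ^ p) with hf
  have hfeq : ∀ x : ℝ, Real.sqrt (1 - β x) = f x := by
    intro x
    rw [hβ, neg_div, sub_neg_eq_add, ← div_div]
  -- continuity on (0, ∞)
  have hfc : ContinuousOn f (Ioi 0) := by
    apply Real.continuous_sqrt.comp_continuousOn
    apply ContinuousOn.add continuousOn_const
    apply ContinuousOn.div continuousOn_const
    · intro x hx
      exact (Real.continuousAt_rpow_const x p (Or.inl (ne_of_gt hx))).continuousWithinAt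
    · intro x hx
      exact (Real.rpow_pos_of_pos hx p).ne'
  -- integrability on (0,1]
  have hbnd01 : IntervalIntegrable (fun x => 1 + Real.sqrt K * x ^ (-(p/2))) volume 0 1 :=
    intervalIntegrable_const.add ((intervalIntegrable_rpow' (by linarith)).const_mul _)
  have hI01 : IntervalIntegrable f volume 0 1 := by
    rw [intervalIntegrable_iff_integrableOn_Ioc_of_le zero_le_one] at hbnd01 ⊢
    refine hbnd01.mono' ((hfc.mono (fun x hx => hx.1)).aestronglyMeasurable measurableSet_Ioc) ?_
    rw [ae_restrict_iff' measurableSet_Ioc]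
    filter_upwards with x hx
    have hx0 : 0 < x := hx.1
    have hu : 0 ≤ K / x ^ p := le_of_lt (div_pos hK0 (Real.rpow_pos_of_pos hx0 p))
    rw [Real.norm_eq_abs, abs_of_nonneg (Real.sqrt_nonneg _)]
    have h1 : Real.sqrt (1 + K / x ^ p) ≤ 1 + Real.sqrt (K / x ^ p) := by
      rw [show (1:ℝ) + Real.sqrt (K / x ^ p) = Real.sqrt ((1 + Real.sqrt (K / x ^ p)) ^ 2) from
        (Real.sqrt_sq (by positivity)).symm]
      apply Real.sqrt_le_sqrt
      nlinarith [Real.sq_sqrt hu, Real.sqrt_nonneg (K / x ^ p)]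
    have h2 : Real.sqrt (K / x ^ p) = Real.sqrt K * x ^ (-(p/2)) := by
      rw [Real.sqrt_div hK0.le, Real.sqrt_eq_rpow (x ^ p), ← Real.rpow_mul hx0.le,
        show p * (1/2) = p/2 by ring, Real.rpow_neg hx0.le, div_eq_mul_inv]
    show Real.sqrt (1 + K / x ^ p) ≤ 1 + Real.sqrt K * x ^ (-(p/2))
    rw [← h2]; exact h1
  -- the remainder g and its bound
  set g : ℝ → ℝ := fun x => f x - 1 - K / 2 * x ^ (-p) with hg
  have hgbound : ∀ x : ℝ, 1 ≤ x → |g x| ≤ K ^ 2 / 8 * x ^ (-(2*p)) := by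
    intro x hx1
    have hx0 : (0:ℝ) < x := lt_of_lt_of_le one_pos hx1
    have hrw : K / x ^ p = K * x ^ (-p) := by
      rw [Real.rpow_neg hx0.le, div_eq_mul_inv]
    have hu0 : 0 ≤ K * x ^ (-p) := by positivity
    have hest := sqrt_one_add_est (K * x ^ (-p)) hu0
    have hsq : (K * x ^ (-p)) ^ 2 = K ^ 2 * x ^ (-(2*p)) := by
      rw [mul_pow, sq (x ^ (-p)), ← Real.rpow_add hx0]
      ring_nf
    have : g x = Real.sqrt (1 + K * x ^ (-p)) - 1 - K * x ^ (-p) / 2 := by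
      rw [hg]; show f x - 1 - K / 2 * x ^ (-p) = _
      rw [hf]; show Real.sqrt (1 + K / x ^ p) - 1 - K / 2 * x ^ (-p) = _
      rw [hrw]; ring
    rw [this]
    calc |Real.sqrt (1 + K * x ^ (-p)) - 1 - K * x ^ (-p) / 2| ≤ (K * x ^ (-p)) ^ 2 / 8 := hest
      _ = K ^ 2 / 8 * x ^ (-(2*p)) := by rw [hsq]; ring
  -- integrability of g on (1, ∞)
  have hgc : ContinuousOn g (Ioi 0) := by
    apply ContinuousOn.sub (ContinuousOn.sub hfc continuousOn_const)
    apply ContinuousOn.mul continuousOn_const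
    intro x hx
    exact (Real.continuousAt_rpow_const x (-p) (Or.inl (ne_of_gt hx))).continuousWithinAt
  have hbint : IntegrableOn (fun x => K ^ 2 / 8 * x ^ (-(2*p))) (Ioi (1:ℝ)) :=
    (integrableOn_Ioi_rpow_of_lt (by linarith) one_pos).const_mul _
  have hgint : IntegrableOn g (Ioi (1:ℝ)) := by
    refine hbint.mono' ((hgc.mono (Ioi_subset_Ioi zero_le_one)).aestronglyMeasurable
      measurableSet_Ioi) ?_
    rw [ae_restrict_iff' measurableSet_Ioi]
    filter_upwards with x hx
    rw [Real.norm_eq_abs]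
    exact hgbound x (le_of_lt hx)
  -- tail estimate
  have htail : ∀ ξ : ℝ, 1 ≤ ξ → |∫ x in Ioi ξ, g x| ≤ K ^ 2 / (8 * (2 * p - 1)) * ξ ^ (1 - 2*p) := by
    intro ξ hξ
    have hξ0 : (0:ℝ) < ξ := lt_of_lt_of_le one_pos hξ
    have hgint' : IntegrableOn g (Ioi ξ) := hgint.mono (Ioi_subset_Ioi hξ) le_rfl
    have hbint' : IntegrableOn (fun x => K ^ 2 / 8 * x ^ (-(2*p))) (Ioi ξ) :=
      (integrableOn_Ioi_rpow_of_lt (by linarith) hξ0).const_mul _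
    calc |∫ x in Ioi ξ, g x| ≤ ∫ x in Ioi ξ, |g x| := by
          simpa [Real.norm_eq_abs] using norm_integral_le_integral_norm (μ := volume.restrict (Ioi ξ)) g
      _ ≤ ∫ x in Ioi ξ, K ^ 2 / 8 * x ^ (-(2*p)) := by
          refine setIntegral_mono_on hgint'.abs hbint' measurableSet_Ioi ?_
          intro x hx
          exact hgbound x (le_trans hξ (le_of_lt hx))
      _ = K ^ 2 / (8 * (2 * p - 1)) * ξ ^ (1 - 2*p) := by
          rw [MeasureTheory.integral_const_mul, integral_Ioi_rpow_of_lt (by linarith) hξ0,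
            show -(2*p) + 1 = 1 - 2*p by ring]
          field_simp [show (1:ℝ) - 2*p ≠ 0 by linarith, show (2:ℝ)*p - 1 ≠ 0 by linarith]
          ring
  -- the constants
  have h1p : (1:ℝ) - p = (2 - α) / (2 + α) := by
    rw [hp]; field_simp; ring
  have hcαval : c ^ α = (1 + α / 2) ^ (2 * α / (2 + α)) := by
    rw [hc, ← Real.rpow_mul hbase.le]
    congr 1
    ring
  have hτE : τ * E = K / (2 * (1 - p)) := by
    rw [hτ, hK, hcαval, neg_div, Real.rpow_neg hbase.le, h1p]
    have hpos : (0:ℝ) < (1 + α / 2) ^ (2 * α / (2 + α)) := Real.rpow_pos_of_pos hbase _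
    rw [show -(2 * α / (2 + α)) = -(2 * α) / (2 + α) by ring] at *
    field_simp
  refine ⟨(∫ x in (0:ℝ)..1, f x) - 1 - K / (2 * (1 - p)) + ∫ x in Ioi 1, g x,
    K ^ 2 / (8 * (2 * p - 1)),
    div_pos (by positivity) (by linarith), ?_⟩
  intro ξ hξ
  have hξ0 : (0:ℝ) < ξ := lt_of_lt_of_le one_pos hξ
  -- interval integrabilities on [1, ξ]
  have hsub : uIcc (1:ℝ) ξ ⊆ Ioi 0 := by
    rw [uIcc_of_le hξ]
    intro x hx; exact lt_of_lt_of_le one_pos hx.1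
  have hI1ξ : IntervalIntegrable f volume 1 ξ := (hfc.mono hsub).intervalIntegrable
  have hIr : IntervalIntegrable (fun x => K / 2 * x ^ (-p)) volume 1 ξ :=
    (intervalIntegrable_rpow' (by linarith)).const_mul _
  have hIg : IntervalIntegrable g volume 1 ξ := (hI1ξ.sub intervalIntegrable_const).sub hIr
  -- splitting the integral
  have e1 : ∫ x in (0:ℝ)..ξ, f x = (∫ x in (0:ℝ)..1, f x) + ∫ x in (1:ℝ)..ξ, f x :=
    (integral_add_adjacent_intervals hI01 hI1ξ).symm
  have e2 : ∫ x in (1:ℝ)..ξ, f x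
      = (∫ x in (1:ℝ)..ξ, (1 + K / 2 * x ^ (-p))) + ∫ x in (1:ℝ)..ξ, g x := by
    rw [← integral_add (intervalIntegrable_const.add hIr) hIg]
    apply integral_congr
    intro x hx
    show f x = 1 + K / 2 * x ^ (-p) + g x
    rw [hg]; ring
  have e3 : ∫ x in (1:ℝ)..ξ, (1 + K / 2 * x ^ (-p))
      = (ξ - 1) + K / 2 * ((ξ ^ (1 - p) - 1) / (1 - p)) := by
    rw [integral_add intervalIntegrable_const hIr, intervalIntegral.integral_const,
      intervalIntegral.integral_const_mul, integral_rpow (Or.inl (by linarith))]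
    simp only [smul_eq_mul, mul_one, show -p + 1 = 1 - p from by ring, Real.one_rpow]
  have e4 : ∫ x in (1:ℝ)..ξ, g x = (∫ x in Ioi (1:ℝ), g x) - ∫ x in Ioi ξ, g x := by
    rw [intervalIntegral.integral_of_le hξ]
    have hu : Ioc (1:ℝ) ξ ∪ Ioi ξ = Ioi 1 := Ioc_union_Ioi_eq_Ioi hξ
    have hd : Disjoint (Ioc (1:ℝ) ξ) (Ioi ξ) := Ioc_disjoint_Ioi le_rfl
    rw [← hu, setIntegral_union hd measurableSet_Ioi
      (hgint.mono (hu ▸ subset_union_left) le_rfl)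
      (hgint.mono (hu ▸ subset_union_right) le_rfl)]
    ring
  -- exponent identities
  have h2p : -(3 * α - 2) / (2 + α) = 1 - 2 * p := by
    rw [hp]; field_simp; ring
  -- put everything together
  simp only [hfeq]
  rw [e1, e2, e3, e4, hτE, h2p, ← h1p]
  have hne : (1:ℝ) - p ≠ 0 := by linarith
  have key : (∫ x in (0:ℝ)..1, f x) + ((ξ - 1) + K / 2 * ((ξ ^ (1 - p) - 1) / (1 - p))
      + ((∫ x in Ioi (1:ℝ), g x) - ∫ x in Ioi ξ, g x)) - ξ
      - K / (2 * (1 - p)) * ξ ^ (1 - p)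
      - ((∫ x in (0:ℝ)..1, f x) - 1 - K / (2 * (1 - p)) + ∫ x in Ioi (1:ℝ), g x)
      = -(∫ x in Ioi ξ, g x) := by
    field_simp
    ring
  rw [key, abs_neg]
  exact htail ξ hξ
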